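/- Let k_e, σ > 0, ε̄, θ̄, s ≥ 0, let Γ ∈ ℝ^{p×p} be symmetric positive definite, define V_L(e, θ̃) ≜ ½ eᵀe + ½ θ̃ᵀΓ⁻¹θ̃, α₂ ≜ max(1, λ_max(Γ⁻¹)), b₀ ≜ min(k_e/2, σ/2), and b₁ ≜ ε̄²/(2k_e) + (σ/2)θ̄² + s. Let b₂ ∈ (0, b₀], let e ∈ ℝⁿ and θ̃ ∈ ℝᵖ with ‖z‖ ≜ √(‖e‖² + ‖θ̃‖²), and let c ≥ 0 satisfy c‖z‖ ≤ b₀ − b₂. Then −k_e‖e‖² + ε̄‖e‖ + c‖e‖‖z‖² − σ‖θ̃‖² + σθ̄‖θ̃‖ + s ≤ −(b₂/α₂) V_L(e, θ̃) + b₁. -/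

import Mathlib

open Matrix

lemma quadform_le_iSup_eigenvalues {p : ℕ} (hp : 0 < p) (A : Matrix (Fin p) (Fin p) ℝ)
    (hA : A.IsHermitian) (x : Fin p → ℝ) :
    x ⬝ᵥ (A *ᵥ x) ≤ (⨆ i, hA.eigenvalues i) * (x ⬝ᵥ x) := by
  have : Nonempty (Fin p) := ⟨⟨0, hp⟩⟩
  set U : Matrix (Fin p) (Fin p) ℝ := (hA.eigenvectorUnitary : Matrix (Fin p) (Fin p) ℝ) with hU
  have hunit : U * star U = 1 := (Matrix.mem_unitaryGroup_iff).mp hA.eigenvectorUnitary.2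
  set y : Fin p → ℝ := star U *ᵥ x with hy
  have hxU : x ᵥ* U = y := by
    ext i; simp [hy, vecMul, mulVec, dotProduct, star_apply, mul_comm]
  have key : x ⬝ᵥ (A *ᵥ x) = ∑ i, hA.eigenvalues i * (y i * y i) := by
    conv_lhs => rw [hA.spectral_theorem, Unitary.conjStarAlgAut_apply]
    rw [← mulVec_mulVec, ← mulVec_mulVec, dotProduct_mulVec x U, hxU]
    simp only [dotProduct, mulVec_diagonal, Function.comp_apply, RCLike.ofReal_real_eq_id, id]
    ring_nf
    exact Finset.sum_congr rfl fun i _ => by ring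
  have hyy : y ⬝ᵥ y = x ⬝ᵥ x := by
    conv_lhs => rw [show y ⬝ᵥ y = (x ᵥ* U) ⬝ᵥ (star U *ᵥ x) from by rw [hxU, hy]]
    rw [← dotProduct_mulVec, mulVec_mulVec, hunit, one_mulVec]
  have hμ : ∀ i, hA.eigenvalues i ≤ ⨆ j, hA.eigenvalues j := fun i =>
    le_ciSup (Set.Finite.bddAbove (Set.finite_range _)) i
  calc x ⬝ᵥ (A *ᵥ x) = ∑ i, hA.eigenvalues i * (y i * y i) := key
    _ ≤ ∑ i, (⨆ j, hA.eigenvalues j) * (y i * y i) :=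
        Finset.sum_le_sum fun i _ => mul_le_mul_of_nonneg_right (hμ i) (mul_self_nonneg _)
    _ = (⨆ j, hA.eigenvalues j) * (y ⬝ᵥ y) := by rw [dotProduct, Finset.mul_sum]
    _ = (⨆ j, hA.eigenvalues j) * (x ⬝ᵥ x) := by rw [hyy]


set_option maxHeartbeats 1000000 in
/-- Composite Lyapunov decrease bound: with `V_L(e,θ̃) = ½eᵀe + ½θ̃ᵀΓ⁻¹θ̃`,
`α₂ = max(1, λ_max(Γ⁻¹))`, `b₀ = min(k_e/2, σ/2)`, `b₁ = ε̄²/(2k_e) + (σ/2)θ̄² + s`,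
`b₂ ∈ (0, b₀]`, and `c‖z‖ ≤ b₀ − b₂` where `‖z‖ = √(‖e‖² + ‖θ̃‖²)`, one has
`−k_e‖e‖² + ε̄‖e‖ + c‖e‖‖z‖² − σ‖θ̃‖² + σθ̄‖θ̃‖ + s ≤ −(b₂/α₂)V_L(e,θ̃) + b₁`. -/
theorem lyapunov_decrease_bound {n p : ℕ} (hp : 0 < p)
    (ke σ εbar θbar s : ℝ) (hke : 0 < ke) (hσ : 0 < σ)
    (hε : 0 ≤ εbar) (hθ : 0 ≤ θbar) (hs : 0 ≤ s)
    (Γ : Matrix (Fin p) (Fin p) ℝ) (hΓ : Γ.PosDef) (hH : (Γ⁻¹).IsHermitian)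
    (e : EuclideanSpace ℝ (Fin n)) (θ : EuclideanSpace ℝ (Fin p)) (b₂ c : ℝ)
    (hc : 0 ≤ c) :
    let VL : ℝ := (1 / 2) * (∑ i, e i * e i) + (1 / 2) * (∑ i, θ i * (Γ⁻¹ *ᵥ (fun j => θ j)) i);
    let α₂ : ℝ := max 1 (⨆ i, hH.eigenvalues i);
    let z : ℝ := Real.sqrt (‖e‖ ^ 2 + ‖θ‖ ^ 2);
    let b₀ : ℝ := min (ke / 2) (σ / 2);
    let b₁ : ℝ := εbar ^ 2 / (2 * ke) + (σ / 2) * θbar ^ 2 + s;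
    0 < b₂ → b₂ ≤ b₀ → c * z ≤ b₀ - b₂ →
      -ke * ‖e‖ ^ 2 + εbar * ‖e‖ + c * ‖e‖ * z ^ 2 - σ * ‖θ‖ ^ 2 + σ * θbar * ‖θ‖ + s ≤
        -(b₂ / α₂) * VL + b₁ := by
  intro VL α₂ z b₀ b₁
  have hVLdef : VL = (1 / 2) * (∑ i, e i * e i)
      + (1 / 2) * (∑ i, θ i * (Γ⁻¹ *ᵥ (fun j => θ j)) i) := rfl
  have hα₂def : α₂ = max 1 (⨆ i, hH.eigenvalues i) := rfl
  have hzdef : z = Real.sqrt (‖e‖ ^ 2 + ‖θ‖ ^ 2) := rfl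
  have hb₀def : b₀ = min (ke / 2) (σ / 2) := rfl
  have hb₁def : b₁ = εbar ^ 2 / (2 * ke) + (σ / 2) * θbar ^ 2 + s := rfl
  clear_value VL α₂ z b₀ b₁
  intro hb₂ hb₂b₀ hcz
  have hNE : Nonempty (Fin p) := ⟨⟨0, hp⟩⟩
  have hE : (0:ℝ) ≤ ‖e‖ := norm_nonneg _
  have hT : (0:ℝ) ≤ ‖θ‖ := norm_nonneg _
  have hz2 : z ^ 2 = ‖e‖ ^ 2 + ‖θ‖ ^ 2 := by
    rw [hzdef]; exact Real.sq_sqrt (by positivity)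
  have hzpos : (0:ℝ) ≤ z := by rw [hzdef]; exact Real.sqrt_nonneg _
  have hEz : ‖e‖ ≤ z := by nlinarith [sq_nonneg (z - ‖e‖), sq_nonneg ‖θ‖]
  have hVe : (∑ i, e i * e i) = ‖e‖ ^ 2 := by
    rw [← real_inner_self_eq_norm_sq]
    simp only [PiLp.inner_apply, RCLike.inner_apply, conj_trivial, mul_comm]
  have hTsum : (∑ i, θ i * θ i) = ‖θ‖ ^ 2 := by
    rw [← real_inner_self_eq_norm_sq]
    simp only [PiLp.inner_apply, RCLike.inner_apply, conj_trivial, mul_comm]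
  have hQ : (∑ i, θ i * (Γ⁻¹ *ᵥ (fun j => θ j)) i)
      ≤ (⨆ i, hH.eigenvalues i) * ‖θ‖ ^ 2 := by
    have h := quadform_le_iSup_eigenvalues hp (Γ⁻¹) hH (fun j => θ j)
    simpa [dotProduct, hTsum] using h
  have hα1 : (1 : ℝ) ≤ α₂ := hα₂def ▸ le_max_left _ _
  have hαμ : (⨆ i, hH.eigenvalues i) ≤ α₂ := hα₂def ▸ le_max_right _ _
  have hα0 : (0 : ℝ) < α₂ := lt_of_lt_of_le one_pos hα1
  have hVL : VL ≤ α₂ * z ^ 2 := by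
    rw [hVLdef, hVe, hz2]
    nlinarith [hQ, mul_le_mul_of_nonneg_right hαμ (sq_nonneg ‖θ‖),
      mul_nonneg (sub_nonneg.2 hα1) (sq_nonneg ‖e‖),
      mul_nonneg (sub_nonneg.2 hα1) (sq_nonneg ‖θ‖)]
  have hfin : (b₂ / α₂) * VL ≤ b₂ * z ^ 2 := by
    calc (b₂ / α₂) * VL ≤ (b₂ / α₂) * (α₂ * z ^ 2) :=
          mul_le_mul_of_nonneg_left hVL (by positivity)
      _ = b₂ * z ^ 2 := by field_simp
  have h1 : εbar * ‖e‖ ≤ ke / 2 * ‖e‖ ^ 2 + εbar ^ 2 / (2 * ke) := by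
    rw [← sub_nonneg]
    have heq : ke / 2 * ‖e‖ ^ 2 + εbar ^ 2 / (2 * ke) - εbar * ‖e‖
        = (ke * ‖e‖ - εbar) ^ 2 / (2 * ke) := by field_simp; ring
    rw [heq]; positivity
  have h2 : σ * θbar * ‖θ‖ ≤ σ / 2 * ‖θ‖ ^ 2 + σ / 2 * θbar ^ 2 := by
    nlinarith [sq_nonneg (‖θ‖ - θbar), hσ.le]
  have h3 : c * ‖e‖ * z ^ 2 ≤ (b₀ - b₂) * z ^ 2 := by
    have hce : c * ‖e‖ ≤ b₀ - b₂ := le_trans (mul_le_mul_of_nonneg_left hEz hc) hcz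
    exact mul_le_mul_of_nonneg_right hce (sq_nonneg z)
  have hb₀ke : b₀ ≤ ke / 2 := hb₀def ▸ min_le_left _ _
  have hb₀σ : b₀ ≤ σ / 2 := hb₀def ▸ min_le_right _ _
  have h5' : b₀ * ‖e‖ ^ 2 ≤ ke / 2 * ‖e‖ ^ 2 := mul_le_mul_of_nonneg_right hb₀ke (sq_nonneg _)
  have h6' : b₀ * ‖θ‖ ^ 2 ≤ σ / 2 * ‖θ‖ ^ 2 := mul_le_mul_of_nonneg_right hb₀σ (sq_nonneg _)
  have h3'' : c * ‖e‖ * z ^ 2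
      ≤ b₀ * ‖e‖ ^ 2 + b₀ * ‖θ‖ ^ 2 - b₂ * ‖e‖ ^ 2 - b₂ * ‖θ‖ ^ 2 := by
    calc c * ‖e‖ * z ^ 2 ≤ (b₀ - b₂) * z ^ 2 := h3
      _ = (b₀ - b₂) * (‖e‖ ^ 2 + ‖θ‖ ^ 2) := by rw [hz2]
      _ = _ := by ring
  have heq2 : -b₂ * z ^ 2 = -(b₂ * ‖e‖ ^ 2) - b₂ * ‖θ‖ ^ 2 := by rw [hz2]; ring
  have hmain : -ke * ‖e‖ ^ 2 + εbar * ‖e‖ + c * ‖e‖ * z ^ 2 - σ * ‖θ‖ ^ 2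
      + σ * θbar * ‖θ‖ + s ≤ -b₂ * z ^ 2 + b₁ := by
    rw [hb₁def]
    linarith only [h1, h2, h3'', h5', h6', heq2]
  linarith only [hfin, hmain]
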